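/- Mutual information does not decrease under classical flagging of an ensemble: let (p_ℓ)_{ℓ=1}^m be a probability vector, let ρ_ℓ be density matrices on the finite-dimensional composite system X⊗Y, let R be an m-dimensional system with orthonormal basis (|ℓ⟩), and let ρ = ∑_ℓ p_ℓ |ℓ⟩⟨ℓ|_R ⊗ (ρ_ℓ)_{XY}. Then I(XR; Y)_ρ ≥ ∑_ℓ p_ℓ · I(X;Y)_{ρ_ℓ}. -/

import Mathlib

open Matrix
open scoped ComplexOrder

noncomputable section

/-- von Neumann entropy `S(ρ) = −Tr(ρ log ρ)`, computed as `∑ −λ log λ` over the eigenvalues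
of a Hermitian matrix. -/
noncomputable def vnEntropy {n : Type*} [Fintype n] [DecidableEq n] (ρ : Matrix n n ℂ) : ℝ :=
  if h : ρ.IsHermitian then ∑ i, Real.negMulLog (h.eigenvalues i) else 0

/-- A density matrix: positive semidefinite with unit trace. -/
def IsDensityMatrix {n : Type*} [Fintype n] (ρ : Matrix n n ℂ) : Prop :=
  ρ.PosSemidef ∧ ρ.trace = 1

/-- Marginal on the first tensor factor. -/
def margFst {α γ : Type} [Fintype γ] (ρ : Matrix (α × γ) (α × γ) ℂ) : Matrix α α ℂ :=
  Matrix.of fun a a' => ∑ c, ρ (a, c) (a', c)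

/-- Marginal on the second tensor factor. -/
def margSnd {α γ : Type} [Fintype α] (ρ : Matrix (α × γ) (α × γ) ℂ) : Matrix γ γ ℂ :=
  Matrix.of fun c c' => ∑ a, ρ (a, c) (a, c')

/-- Mutual information `I(X;Y) = S(X) + S(Y) − S(XY)` of a bipartite state. -/
noncomputable def mutualInfo {α γ : Type} [Fintype α] [DecidableEq α] [Fintype γ] [DecidableEq γ]
    (ρ : Matrix (α × γ) (α × γ) ℂ) : ℝ :=
  vnEntropy (margFst ρ) + vnEntropy (margSnd ρ) - vnEntropy ρ

/-- The classically flagged state `∑ ℓ, p ℓ • |ℓ⟩⟨ℓ|_R ⊗ (ρs ℓ)_{XY}` on `(X ⊗ R) ⊗ Y`,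
where `R = Fin m` carries the orthonormal flag basis. -/
def flaggedState {X Y : Type} {m : ℕ} (p : Fin m → ℝ)
    (ρs : Fin m → Matrix (X × Y) (X × Y) ℂ) :
    Matrix ((X × Fin m) × Y) ((X × Fin m) × Y) ℂ :=
  Matrix.of fun a b =>
    if a.1.2 = b.1.2 then (p a.1.2 : ℂ) * ρs a.1.2 (a.1.1, a.2) (b.1.1, b.2) else 0


open Polynomial

section Aux

theorem charpoly_conj' {n : Type*} [Fintype n] [DecidableEq n]
    (U V A : Matrix n n ℂ) (hUV : U * V = 1) (hVU : V * U = 1) :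
    (U * A * V).charpoly = A.charpoly := by
  have hc : Commute (Matrix.scalar n (X : ℂ[X])) ((C : ℂ →+* ℂ[X]).mapMatrix U) :=
    Matrix.scalar_commute _ (fun r' => Commute.all _ _) _
  have h1 : charmatrix (U * A * V) = (C : ℂ →+* ℂ[X]).mapMatrix U * charmatrix A *
      (C : ℂ →+* ℂ[X]).mapMatrix V := by
    unfold charmatrix
    rw [mul_sub, sub_mul]
    congr 1
    · rw [← hc.eq, mul_assoc, ← _root_.map_mul, hUV, _root_.map_one, mul_one]
    · rw [_root_.map_mul, _root_.map_mul]
  have h2 : ((C : ℂ →+* ℂ[X]).mapMatrix U).det * ((C : ℂ →+* ℂ[X]).mapMatrix V).det = 1 := by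
    rw [← Matrix.det_mul, ← _root_.map_mul, hUV, _root_.map_one, Matrix.det_one]
  have h3 : (U * A * V).charpoly = ((C : ℂ →+* ℂ[X]).mapMatrix U).det * (charmatrix A).det *
      ((C : ℂ →+* ℂ[X]).mapMatrix V).det := by
    rw [Matrix.charpoly, h1, Matrix.det_mul, Matrix.det_mul]
  rw [h3, Matrix.charpoly]
  calc ((C : ℂ →+* ℂ[X]).mapMatrix U).det * (charmatrix A).det *
      ((C : ℂ →+* ℂ[X]).mapMatrix V).det
      = ((C : ℂ →+* ℂ[X]).mapMatrix U).det * ((C : ℂ →+* ℂ[X]).mapMatrix V).det *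
        (charmatrix A).det := by ring
    _ = (charmatrix A).det := by rw [h2, one_mul]

theorem charpoly_diagonal' {n : Type*} [Fintype n] [DecidableEq n] (d : n → ℂ) :
    (Matrix.diagonal d).charpoly = ∏ i, (X - C (d i)) := by
  rw [Matrix.charpoly]
  have : charmatrix (Matrix.diagonal d) = Matrix.diagonal (fun i => X - C (d i)) := by
    ext i j
    by_cases h : i = j
    · subst h; simp [charmatrix_apply]
    · simp [charmatrix_apply, Matrix.diagonal_apply_ne _ h, h]
  rw [this, det_diagonal]

theorem charpoly_herm_smul {n : Type*} [Fintype n] [DecidableEq n] {A : Matrix n n ℂ}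
    (hA : A.IsHermitian) (c : ℝ) :
    ((c : ℂ) • A).charpoly = ∏ i, (X - C (((c * hA.eigenvalues i : ℝ) : ℂ))) := by
  have hU1 : (hA.eigenvectorUnitary : Matrix n n ℂ) * star (hA.eigenvectorUnitary : Matrix n n ℂ) = 1 :=
    Matrix.mem_unitaryGroup_iff.mp hA.eigenvectorUnitary.2
  have hU2 : star (hA.eigenvectorUnitary : Matrix n n ℂ) * (hA.eigenvectorUnitary : Matrix n n ℂ) = 1 :=
    Matrix.mem_unitaryGroup_iff'.mp hA.eigenvectorUnitary.2
  have h : (c : ℂ) • A = (hA.eigenvectorUnitary : Matrix n n ℂ) *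
      Matrix.diagonal (fun i => ((c * hA.eigenvalues i : ℝ) : ℂ)) *
      star (hA.eigenvectorUnitary : Matrix n n ℂ) := by
    conv_lhs => rw [hA.spectral_theorem, Unitary.conjStarAlgAut_apply]
    rw [← smul_mul_assoc, ← mul_smul_comm]
    congr 2
    ext i j
    rcases eq_or_ne i j with h | h
    · subst h; simp [Matrix.diagonal, Function.comp]
    · simp [Matrix.diagonal_apply_ne _ h]
  rw [h, charpoly_conj' _ _ _ hU1 hU2, charpoly_diagonal']

theorem roots_charpoly_herm {n : Type*} [Fintype n] [DecidableEq n] {A : Matrix n n ℂ}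
    (hA : A.IsHermitian) :
    A.charpoly.roots = (Finset.univ.val.map hA.eigenvalues).map Complex.ofReal := by
  have h := charpoly_herm_smul hA 1
  simp only [Complex.ofReal_one, one_smul, one_mul] at h
  rw [h]
  have : ∏ i, (X - C ((hA.eigenvalues i : ℂ))) =
      (((Finset.univ.val.map hA.eigenvalues).map Complex.ofReal).map fun a => X - C a).prod := by
    rw [Multiset.map_map, Multiset.map_map]
    rfl
  rw [this, Polynomial.roots_multiset_prod_X_sub_C]

theorem vnEntropy_eq_multiset {n : Type*} [Fintype n] [DecidableEq n] {A : Matrix n n ℂ}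
    (hA : A.IsHermitian) {r : Multiset ℝ} (h : r.map Complex.ofReal = A.charpoly.roots) :
    vnEntropy A = (r.map Real.negMulLog).sum := by
  rw [roots_charpoly_herm hA] at h
  have hr : r = Finset.univ.val.map hA.eigenvalues :=
    Multiset.map_injective Complex.ofReal_injective h
  rw [vnEntropy, dif_pos hA, hr, Multiset.map_map, Finset.sum]
  rfl

theorem charpoly_blockDiagonal' {n o : Type*} [Fintype n] [DecidableEq n] [Fintype o]
    [DecidableEq o] (M : o → Matrix n n ℂ) :
    (Matrix.blockDiagonal M).charpoly = ∏ k, (M k).charpoly := by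
  have h : charmatrix (Matrix.blockDiagonal M) = Matrix.blockDiagonal (fun k => charmatrix (M k)) := by
    ext ⟨i, k⟩ ⟨j, k'⟩
    rcases eq_or_ne k k' with hk | hk
    · subst hk
      simp [charmatrix_apply, Matrix.blockDiagonal_apply, Matrix.diagonal]
    · have : ((i,k) : n × o) ≠ (j,k') := by simp [Prod.ext_iff, hk]
      simp [charmatrix_apply, Matrix.blockDiagonal_apply, hk, Matrix.diagonal_apply_ne _ this]
  rw [Matrix.charpoly, h, Matrix.det_blockDiagonal]
  rfl

theorem sum_eigenvalues_eq_one {n : Type*} [Fintype n] [DecidableEq n] {A : Matrix n n ℂ}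
    (hA : A.IsHermitian) (ht : A.trace = 1) : ∑ i, hA.eigenvalues i = 1 := by
  have hU2 : star (hA.eigenvectorUnitary : Matrix n n ℂ) * (hA.eigenvectorUnitary : Matrix n n ℂ) = 1 :=
    Matrix.mem_unitaryGroup_iff'.mp hA.eigenvectorUnitary.2
  have h : A.trace = (Matrix.diagonal (Complex.ofReal ∘ hA.eigenvalues)).trace := by
    conv_lhs => rw [hA.spectral_theorem, Unitary.conjStarAlgAut_apply]
    rw [Matrix.trace_mul_cycle, hU2, one_mul]
    rfl
  rw [ht, Matrix.trace_diagonal] at h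
  have : ((∑ i, hA.eigenvalues i : ℝ) : ℂ) = 1 := by
    push_cast
    rw [h]
    rfl
  exact_mod_cast this

theorem herm_real_smul {n : Type*} [Fintype n] {A : Matrix n n ℂ} (hA : A.IsHermitian) (c : ℝ) :
    ((c : ℂ) • A).IsHermitian := by
  unfold Matrix.IsHermitian
  rw [Matrix.conjTranspose_smul, Complex.star_def, Complex.conj_ofReal, hA.eq]

theorem herm_blockDiagonal {n : Type*} [Fintype n] [DecidableEq n] {m : ℕ}
    (p : Fin m → ℝ) (σ : Fin m → Matrix n n ℂ) (hσ : ∀ ℓ, (σ ℓ).IsHermitian) :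
    (Matrix.blockDiagonal fun ℓ => (p ℓ : ℂ) • σ ℓ).IsHermitian := by
  unfold Matrix.IsHermitian
  rw [Matrix.blockDiagonal_conjTranspose,
    show (fun k => ((p k : ℂ) • σ k)ᴴ) = (fun k => (p k : ℂ) • σ k) from
      funext fun k => (herm_real_smul (hσ k) (p k)).eq]

theorem vnEntropy_blockDiagonal {n : Type*} [Fintype n] [DecidableEq n] {m : ℕ}
    (p : Fin m → ℝ) (σ : Fin m → Matrix n n ℂ) (hσ : ∀ ℓ, (σ ℓ).IsHermitian)
    (htr : ∀ ℓ, (σ ℓ).trace = 1) :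
    vnEntropy (Matrix.blockDiagonal fun ℓ => (p ℓ : ℂ) • σ ℓ)
      = ∑ ℓ, (p ℓ * vnEntropy (σ ℓ) + Real.negMulLog (p ℓ)) := by
  have hH : (Matrix.blockDiagonal fun ℓ => (p ℓ : ℂ) • σ ℓ).IsHermitian :=
    herm_blockDiagonal p σ hσ
  set r : Multiset ℝ := Finset.univ.val.bind
    (fun ℓ : Fin m => Finset.univ.val.map (fun i : n => p ℓ * (hσ ℓ).eigenvalues i)) with hr
  have hroots : r.map Complex.ofReal =
      (Matrix.blockDiagonal fun ℓ => (p ℓ : ℂ) • σ ℓ).charpoly.roots := by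
    rw [charpoly_blockDiagonal']
    have h2 : ∀ ℓ, ((p ℓ : ℂ) • σ ℓ).charpoly =
        (((Finset.univ.val.map (fun i : n => p ℓ * (hσ ℓ).eigenvalues i)).map
          Complex.ofReal).map fun a => X - C a).prod := by
      intro ℓ
      rw [charpoly_herm_smul (hσ ℓ) (p ℓ), Multiset.map_map, Multiset.map_map]
      rfl
    calc (r.map Complex.ofReal)
        = Finset.univ.val.bind (fun ℓ : Fin m =>
            ((Finset.univ.val.map (fun i : n => p ℓ * (hσ ℓ).eigenvalues i)).map
              Complex.ofReal)) := by rw [hr, Multiset.map_bind]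
      _ = _ := by
          rw [← Polynomial.roots_multiset_prod_X_sub_C
            (Finset.univ.val.bind (fun ℓ : Fin m =>
              ((Finset.univ.val.map (fun i : n => p ℓ * (hσ ℓ).eigenvalues i)).map
                Complex.ofReal)))]
          congr 1
          rw [Multiset.map_bind, Multiset.prod_bind]
          simp only [h2]
          rfl
  rw [vnEntropy_eq_multiset hH hroots, hr, Multiset.map_bind, Multiset.sum_bind]
  have key : ∀ ℓ : Fin m, ((Finset.univ.val.map fun i : n => p ℓ * (hσ ℓ).eigenvalues i).map
      Real.negMulLog).sum = p ℓ * vnEntropy (σ ℓ) + Real.negMulLog (p ℓ) := by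
    intro ℓ
    rw [Multiset.map_map]
    have hs : ((Finset.univ.val.map (Real.negMulLog ∘ fun i : n => p ℓ * (hσ ℓ).eigenvalues i))).sum
        = ∑ i : n, Real.negMulLog (p ℓ * (hσ ℓ).eigenvalues i) := rfl
    rw [hs]
    have h6 : ∀ i : n, Real.negMulLog (p ℓ * (hσ ℓ).eigenvalues i)
        = (hσ ℓ).eigenvalues i * Real.negMulLog (p ℓ) + p ℓ * Real.negMulLog ((hσ ℓ).eigenvalues i) := by
      intro i; rw [Real.negMulLog_mul]
    rw [Finset.sum_congr rfl fun i _ => h6 i, Finset.sum_add_distrib, ← Finset.sum_mul,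
      sum_eigenvalues_eq_one (hσ ℓ) (htr ℓ), one_mul, ← Finset.mul_sum, vnEntropy, dif_pos (hσ ℓ)]
    ring
  calc (Finset.univ.val.map fun ℓ => ((Finset.univ.val.map
        fun i : n => p ℓ * (hσ ℓ).eigenvalues i).map Real.negMulLog).sum).sum
      = (Finset.univ.val.map fun ℓ => p ℓ * vnEntropy (σ ℓ) + Real.negMulLog (p ℓ)).sum := by
        congr 1; exact Multiset.map_congr rfl fun ℓ _ => key ℓ
    _ = _ := rfl

theorem vnEntropy_reindex {n n' : Type*} [Fintype n] [DecidableEq n] [Fintype n'] [DecidableEq n']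
    (e : n ≃ n') (A : Matrix n n ℂ) (hA : A.IsHermitian) :
    vnEntropy (Matrix.reindex e e A) = vnEntropy A := by
  have hB : (Matrix.reindex e e A).IsHermitian := by
    rw [Matrix.reindex_apply]
    exact hA.submatrix _
  rw [vnEntropy_eq_multiset hB (r := Finset.univ.val.map hA.eigenvalues)
      (by rw [Matrix.charpoly_reindex, roots_charpoly_herm hA]),
    vnEntropy_eq_multiset hA (r := Finset.univ.val.map hA.eigenvalues)
      (by rw [roots_charpoly_herm hA])]
theorem vnEntropy_concave {n : Type*} [Fintype n] [DecidableEq n] {m : ℕ}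
    (p : Fin m → ℝ) (hp : ∀ ℓ, 0 ≤ p ℓ) (hp1 : ∑ ℓ, p ℓ = 1)
    (σ : Fin m → Matrix n n ℂ) (hσ : ∀ ℓ, (σ ℓ).PosSemidef) (htr : ∀ ℓ, (σ ℓ).trace = 1) :
    ∑ ℓ, p ℓ * vnEntropy (σ ℓ) ≤ vnEntropy (∑ ℓ, (p ℓ : ℂ) • σ ℓ) := by
  classical
  set ρ : Matrix n n ℂ := ∑ ℓ, (p ℓ : ℂ) • σ ℓ with hρdef
  have hρ : ρ.IsHermitian := by
    unfold Matrix.IsHermitian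
    rw [hρdef, Matrix.conjTranspose_sum]
    exact Finset.sum_congr rfl fun ℓ _ => (herm_real_smul (hσ ℓ).1 (p ℓ)).eq
  set U : Matrix n n ℂ := (hρ.eigenvectorUnitary : Matrix n n ℂ) with hUdef
  have hUU : U * star U = 1 := Matrix.mem_unitaryGroup_iff.mp hρ.eigenvectorUnitary.2
  have hUU' : star U * U = 1 := Matrix.mem_unitaryGroup_iff'.mp hρ.eigenvectorUnitary.2
  set W : Fin m → Matrix n n ℂ := fun ℓ => ((hσ ℓ).1.eigenvectorUnitary : Matrix n n ℂ)
    with hWdef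
  have hWW : ∀ ℓ, W ℓ * star (W ℓ) = 1 := fun ℓ =>
    Matrix.mem_unitaryGroup_iff.mp (hσ ℓ).1.eigenvectorUnitary.2
  have hWW' : ∀ ℓ, star (W ℓ) * W ℓ = 1 := fun ℓ =>
    Matrix.mem_unitaryGroup_iff'.mp (hσ ℓ).1.eigenvectorUnitary.2
  set V : Fin m → Matrix n n ℂ := fun ℓ => star U * W ℓ with hVdef
  have hVV : ∀ ℓ, V ℓ * star (V ℓ) = 1 := by
    intro ℓ
    rw [hVdef]
    simp only [StarMul.star_mul, star_star]
    calc star U * W ℓ * (star (W ℓ) * U) = star U * (W ℓ * star (W ℓ)) * U := by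
          simp only [Matrix.mul_assoc]
      _ = 1 := by rw [hWW ℓ, Matrix.mul_one, hUU']
  have hVV' : ∀ ℓ, star (V ℓ) * V ℓ = 1 := by
    intro ℓ
    rw [hVdef]
    simp only [StarMul.star_mul, star_star]
    calc star (W ℓ) * U * (star U * W ℓ) = star (W ℓ) * (U * star U) * W ℓ := by
          simp only [Matrix.mul_assoc]
      _ = 1 := by rw [hUU, Matrix.mul_one, hWW' ℓ]
  have hrow : ∀ ℓ i, ∑ j, Complex.normSq (V ℓ i j) = 1 := by
    intro ℓ i
    have h1 : (V ℓ * star (V ℓ)) i i = 1 := by rw [hVV ℓ]; simp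
    rw [Matrix.mul_apply] at h1
    have : ∀ j, V ℓ i j * (star (V ℓ)) j i = ((Complex.normSq (V ℓ i j) : ℝ) : ℂ) := by
      intro j
      rw [Matrix.star_apply, Complex.star_def, Complex.mul_conj]
    rw [Finset.sum_congr rfl fun j _ => this j] at h1
    exact_mod_cast h1
  have hcol : ∀ ℓ j, ∑ i, Complex.normSq (V ℓ i j) = 1 := by
    intro ℓ j
    have h1 : (star (V ℓ) * V ℓ) j j = 1 := by rw [hVV' ℓ]; simp
    rw [Matrix.mul_apply] at h1
    have : ∀ i, (star (V ℓ)) j i * V ℓ i j = ((Complex.normSq (V ℓ i j) : ℝ) : ℂ) := by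
      intro i
      rw [Matrix.star_apply, Complex.star_def, mul_comm, Complex.mul_conj]
    rw [Finset.sum_congr rfl fun i _ => this i] at h1
    exact_mod_cast h1
  have hdiag : ∀ ℓ i, (star U * σ ℓ * U) i i
      = ((∑ j, Complex.normSq (V ℓ i j) * (hσ ℓ).1.eigenvalues j : ℝ) : ℂ) := by
    intro ℓ i
    have hσspec : star U * σ ℓ * U
        = V ℓ * Matrix.diagonal (RCLike.ofReal ∘ (hσ ℓ).1.eigenvalues) * star (V ℓ) := by
      conv_lhs => rw [(hσ ℓ).1.spectral_theorem, Unitary.conjStarAlgAut_apply]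
      rw [hVdef]
      simp only [StarMul.star_mul, star_star, Matrix.mul_assoc]
      rfl
    rw [hσspec, Matrix.mul_apply]
    have key : ∀ j : n, (V ℓ * Matrix.diagonal ((RCLike.ofReal ∘ (hσ ℓ).1.eigenvalues : n → ℂ))) i j
        * (star (V ℓ)) j i
        = ((Complex.normSq (V ℓ i j) * (hσ ℓ).1.eigenvalues j : ℝ) : ℂ) := by
      intro j
      rw [Matrix.mul_diagonal, Matrix.star_apply, show star (V ℓ i j) = (starRingEnd ℂ) (V ℓ i j) from rfl]
      have h5 : V ℓ i j * ((RCLike.ofReal ∘ (hσ ℓ).1.eigenvalues : n → ℂ) j) * (starRingEnd ℂ) (V ℓ i j)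
          = (V ℓ i j * (starRingEnd ℂ) (V ℓ i j)) * (((hσ ℓ).1.eigenvalues j : ℝ) : ℂ) := by
        show V ℓ i j * (((hσ ℓ).1.eigenvalues j : ℝ) : ℂ) * (starRingEnd ℂ) (V ℓ i j) = _
        ring
      rw [h5, Complex.mul_conj]
      push_cast
      ring
    rw [Finset.sum_congr rfl fun j _ => key j]
    push_cast
    rfl
  have heig : ∀ i, hρ.eigenvalues i
      = ∑ q : Fin m × n, (p q.1 * Complex.normSq (V q.1 i q.2)) * (hσ q.1).1.eigenvalues q.2 := by
    intro i
    have h1 : star U * ρ * U = Matrix.diagonal (RCLike.ofReal ∘ hρ.eigenvalues) :=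
      by have := hρ.conjStarAlgAut_star_eigenvectorUnitary; rwa [Unitary.conjStarAlgAut_apply, Unitary.coe_star, star_star] at this
    have h2 : (star U * ρ * U) i i = ∑ ℓ, (p ℓ : ℂ) * (star U * σ ℓ * U) i i := by
      rw [hρdef, Matrix.mul_sum, Matrix.sum_mul]
      rw [show (∑ ℓ, star U * ((p ℓ : ℂ) • σ ℓ) * U) = ∑ ℓ, (p ℓ : ℂ) • (star U * σ ℓ * U) from
        Finset.sum_congr rfl fun ℓ _ => by
          rw [Matrix.mul_smul, Matrix.smul_mul]]
      rw [Matrix.sum_apply]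
      exact Finset.sum_congr rfl fun ℓ _ => rfl
    have h3 : ((hρ.eigenvalues i : ℝ) : ℂ)
        = ((∑ ℓ, p ℓ * ∑ j, Complex.normSq (V ℓ i j) * (hσ ℓ).1.eigenvalues j : ℝ) : ℂ) := by
      calc ((hρ.eigenvalues i : ℝ) : ℂ) = (star U * ρ * U) i i := by
            rw [h1]; simp [Matrix.diagonal]
        _ = ∑ ℓ, (p ℓ : ℂ) * (star U * σ ℓ * U) i i := h2
        _ = _ := by
            rw [Finset.sum_congr rfl fun ℓ (_ : ℓ ∈ Finset.univ) => by rw [hdiag ℓ i]]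
            push_cast
            rfl
    have h4 := Complex.ofReal_injective h3
    rw [h4, Fintype.sum_prod_type]
    refine Finset.sum_congr rfl fun ℓ _ => ?_
    rw [Finset.mul_sum]
    exact Finset.sum_congr rfl fun j _ => by ring
  -- Jensen per i
  have hjensen : ∀ i, ∑ q : Fin m × n,
      (p q.1 * Complex.normSq (V q.1 i q.2)) * Real.negMulLog ((hσ q.1).1.eigenvalues q.2)
      ≤ Real.negMulLog (hρ.eigenvalues i) := by
    intro i
    rw [heig i]
    have := Real.concaveOn_negMulLog.le_map_sum (t := (Finset.univ : Finset (Fin m × n)))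
      (w := fun q => p q.1 * Complex.normSq (V q.1 i q.2))
      (p := fun q => (hσ q.1).1.eigenvalues q.2)
      (fun q _ => mul_nonneg (hp q.1) (Complex.normSq_nonneg _))
      (by
        rw [Fintype.sum_prod_type]
        calc ∑ ℓ, ∑ j, p ℓ * Complex.normSq (V ℓ i j)
            = ∑ ℓ, p ℓ * ∑ j, Complex.normSq (V ℓ i j) := by
              exact Finset.sum_congr rfl fun ℓ _ => (Finset.mul_sum _ _ _).symm
          _ = ∑ ℓ, p ℓ := by
              exact Finset.sum_congr rfl fun ℓ _ => by rw [hrow ℓ i, mul_one]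
          _ = 1 := hp1)
      (fun q _ => (hσ q.1).eigenvalues_nonneg q.2)
    simpa using this
  rw [vnEntropy, dif_pos hρ]
  calc ∑ ℓ, p ℓ * vnEntropy (σ ℓ)
      = ∑ ℓ, p ℓ * ∑ j, Real.negMulLog ((hσ ℓ).1.eigenvalues j) := by
        refine Finset.sum_congr rfl fun ℓ _ => ?_
        rw [vnEntropy, dif_pos (hσ ℓ).1]
    _ = ∑ ℓ, ∑ j, p ℓ * Real.negMulLog ((hσ ℓ).1.eigenvalues j) := by
        exact Finset.sum_congr rfl fun ℓ _ => Finset.mul_sum _ _ _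
    _ = ∑ q : Fin m × n, p q.1 * Real.negMulLog ((hσ q.1).1.eigenvalues q.2) := by
        rw [Fintype.sum_prod_type]
    _ = ∑ q : Fin m × n, ∑ i,
          (p q.1 * Complex.normSq (V q.1 i q.2)) * Real.negMulLog ((hσ q.1).1.eigenvalues q.2) := by
        refine Finset.sum_congr rfl fun q _ => ?_
        rw [show (∑ i, (p q.1 * Complex.normSq (V q.1 i q.2))
            * Real.negMulLog ((hσ q.1).1.eigenvalues q.2))
          = (∑ i, Complex.normSq (V q.1 i q.2)) * (p q.1
            * Real.negMulLog ((hσ q.1).1.eigenvalues q.2)) from by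
            rw [Finset.sum_mul]; exact Finset.sum_congr rfl fun i _ => by ring]
        rw [hcol q.1 q.2, one_mul]
    _ = ∑ i, ∑ q : Fin m × n,
          (p q.1 * Complex.normSq (V q.1 i q.2)) * Real.negMulLog ((hσ q.1).1.eigenvalues q.2) :=
        Finset.sum_comm
    _ ≤ ∑ i, Real.negMulLog (hρ.eigenvalues i) := Finset.sum_le_sum fun i _ => hjensen i

theorem posSemidef_sum {n ι : Type*} [Fintype n] (s : Finset ι) (f : ι → Matrix n n ℂ)
    (h : ∀ i ∈ s, (f i).PosSemidef) : (∑ i ∈ s, f i).PosSemidef := by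
  classical
  induction s using Finset.induction_on with
  | empty => simpa using Matrix.PosSemidef.zero
  | insert a s hx ih =>
    rw [Finset.sum_insert hx]
    exact (h _ (Finset.mem_insert_self _ _)).add (ih fun i hi => h i (Finset.mem_insert_of_mem hi))

theorem margFst_eq_sum {α γ : Type} [Fintype γ] (A : Matrix (α × γ) (α × γ) ℂ) :
    margFst A = ∑ c, A.submatrix (fun a => (a, c)) (fun a => (a, c)) := by
  ext a a'
  simp [margFst, Matrix.sum_apply, Matrix.submatrix]

theorem margSnd_eq_sum {α γ : Type} [Fintype α] (A : Matrix (α × γ) (α × γ) ℂ) :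
    margSnd A = ∑ a, A.submatrix (fun c => (a, c)) (fun c => (a, c)) := by
  ext c c'
  simp [margSnd, Matrix.sum_apply, Matrix.submatrix]

theorem margFst_posSemidef {α γ : Type} [Fintype α] [Fintype γ]
    {A : Matrix (α × γ) (α × γ) ℂ} (hA : A.PosSemidef) : (margFst A).PosSemidef := by
  rw [margFst_eq_sum]
  exact posSemidef_sum _ _ fun c _ => hA.submatrix _

theorem margSnd_posSemidef {α γ : Type} [Fintype α] [Fintype γ]
    {A : Matrix (α × γ) (α × γ) ℂ} (hA : A.PosSemidef) : (margSnd A).PosSemidef := by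
  rw [margSnd_eq_sum]
  exact posSemidef_sum _ _ fun a _ => hA.submatrix _

theorem margFst_trace {α γ : Type} [Fintype α] [Fintype γ] (A : Matrix (α × γ) (α × γ) ℂ) :
    (margFst A).trace = A.trace := by
  simp only [Matrix.trace, Matrix.diag, margFst, Matrix.of_apply]
  rw [show ∑ x : α, ∑ c : γ, A (x, c) (x, c) = ∑ q : α × γ, A q q from
    (Fintype.sum_prod_type (f := fun q : α × γ => A q q)).symm]

theorem margSnd_trace {α γ : Type} [Fintype α] [Fintype γ] (A : Matrix (α × γ) (α × γ) ℂ) :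
    (margSnd A).trace = A.trace := by
  simp only [Matrix.trace, Matrix.diag, margSnd, Matrix.of_apply]
  rw [Finset.sum_comm, show ∑ a : α, ∑ c : γ, A (a, c) (a, c) = ∑ q : α × γ, A q q from
    (Fintype.sum_prod_type (f := fun q : α × γ => A q q)).symm]

def flagEquiv (X Y : Type) (m : ℕ) : ((X × Y) × Fin m) ≃ ((X × Fin m) × Y) where
  toFun q := ((q.1.1, q.2), q.1.2)
  invFun a := ((a.1.1, a.2), a.1.2)
  left_inv q := rfl
  right_inv a := rfl

theorem flaggedState_eq_reindex {X Y : Type} {m : ℕ} (p : Fin m → ℝ)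
    (ρs : Fin m → Matrix (X × Y) (X × Y) ℂ) [DecidableEq (Fin m)] :
    flaggedState p ρs = Matrix.reindex (flagEquiv X Y m) (flagEquiv X Y m)
      (Matrix.blockDiagonal fun ℓ => (p ℓ : ℂ) • ρs ℓ) := by
  ext ⟨⟨x, ℓ⟩, y⟩ ⟨⟨x', ℓ'⟩, y'⟩
  simp only [flaggedState, Matrix.of_apply, Matrix.reindex_apply, Matrix.submatrix_apply,
    Matrix.blockDiagonal_apply, flagEquiv, Equiv.coe_fn_symm_mk]
  rcases eq_or_ne ℓ ℓ' with h | h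
  · subst h; simp
  · simp [h]

theorem margFst_flaggedState {X Y : Type} [Fintype Y] {m : ℕ} (p : Fin m → ℝ)
    (ρs : Fin m → Matrix (X × Y) (X × Y) ℂ) :
    margFst (flaggedState p ρs)
      = Matrix.blockDiagonal fun ℓ => (p ℓ : ℂ) • margFst (ρs ℓ) := by
  ext ⟨x, ℓ⟩ ⟨x', ℓ'⟩
  simp only [margFst, Matrix.of_apply, flaggedState, Matrix.blockDiagonal_apply,
    Matrix.smul_apply, smul_eq_mul]
  rcases eq_or_ne ℓ ℓ' with h | h
  · subst h; simp [Finset.mul_sum]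
  · simp [h]

theorem margSnd_flaggedState {X Y : Type} [Fintype X] [Fintype Y] {m : ℕ} (p : Fin m → ℝ)
    (ρs : Fin m → Matrix (X × Y) (X × Y) ℂ) :
    margSnd (flaggedState p ρs) = ∑ ℓ, (p ℓ : ℂ) • margSnd (ρs ℓ) := by
  ext c c'
  simp only [margSnd, Matrix.of_apply, flaggedState, Matrix.sum_apply, Matrix.smul_apply,
    smul_eq_mul]
  simp only [if_true]
  rw [Fintype.sum_prod_type, Finset.sum_comm]
  exact Finset.sum_congr rfl fun ℓ _ => by rw [Finset.mul_sum]

end Aux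

/-- **Statement 7.** Mutual information does not decrease under classical flagging of an
ensemble: `I(XR;Y)_ρ ≥ ∑ ℓ, p ℓ · I(X;Y)_{ρ_ℓ}` for `ρ = ∑ ℓ, p ℓ • |ℓ⟩⟨ℓ|_R ⊗ ρ_ℓ`. -/
theorem flagged_mutual_info_ge {X Y : Type} [Fintype X] [DecidableEq X]
    [Fintype Y] [DecidableEq Y] {m : ℕ} (p : Fin m → ℝ)
    (hp : ∀ ℓ, 0 ≤ p ℓ) (hp1 : ∑ ℓ, p ℓ = 1)
    (ρs : Fin m → Matrix (X × Y) (X × Y) ℂ) (hρs : ∀ ℓ, IsDensityMatrix (ρs ℓ)) :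
    ∑ ℓ, p ℓ * mutualInfo (ρs ℓ) ≤ mutualInfo (flaggedState p ρs) := by
  classical
  have hherm : ∀ ℓ, (ρs ℓ).IsHermitian := fun ℓ => (hρs ℓ).1.1
  have htr : ∀ ℓ, (ρs ℓ).trace = 1 := fun ℓ => (hρs ℓ).2
  have hS3 : vnEntropy (flaggedState p ρs)
      = ∑ ℓ, (p ℓ * vnEntropy (ρs ℓ) + Real.negMulLog (p ℓ)) := by
    rw [flaggedState_eq_reindex p ρs,
      vnEntropy_reindex _ _ (herm_blockDiagonal p ρs hherm),
      vnEntropy_blockDiagonal p ρs hherm htr]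
  have hS1 : vnEntropy (margFst (flaggedState p ρs))
      = ∑ ℓ, (p ℓ * vnEntropy (margFst (ρs ℓ)) + Real.negMulLog (p ℓ)) := by
    rw [margFst_flaggedState,
      vnEntropy_blockDiagonal p _ (fun ℓ => (margFst_posSemidef (hρs ℓ).1).1)
        (fun ℓ => by rw [margFst_trace]; exact htr ℓ)]
  have hS2 : ∑ ℓ, p ℓ * vnEntropy (margSnd (ρs ℓ))
      ≤ vnEntropy (margSnd (flaggedState p ρs)) := by
    rw [margSnd_flaggedState]
    exact vnEntropy_concave p hp hp1 _ (fun ℓ => margSnd_posSemidef (hρs ℓ).1)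
      (fun ℓ => by rw [margSnd_trace]; exact htr ℓ)
  unfold mutualInfo
  rw [hS1, hS3]
  have e1 : ∑ ℓ, p ℓ * (vnEntropy (margFst (ρs ℓ)) + vnEntropy (margSnd (ρs ℓ))
        - vnEntropy (ρs ℓ))
      = ∑ ℓ, p ℓ * vnEntropy (margFst (ρs ℓ)) + ∑ ℓ, p ℓ * vnEntropy (margSnd (ρs ℓ))
        - ∑ ℓ, p ℓ * vnEntropy (ρs ℓ) := by
    rw [← Finset.sum_add_distrib, ← Finset.sum_sub_distrib]
    exact Finset.sum_congr rfl fun ℓ _ => by ring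
  have e2 : ∑ ℓ, (p ℓ * vnEntropy (margFst (ρs ℓ)) + Real.negMulLog (p ℓ))
      = ∑ ℓ, p ℓ * vnEntropy (margFst (ρs ℓ)) + ∑ ℓ, Real.negMulLog (p ℓ) :=
    Finset.sum_add_distrib
  have e3 : ∑ ℓ, (p ℓ * vnEntropy (ρs ℓ) + Real.negMulLog (p ℓ))
      = ∑ ℓ, p ℓ * vnEntropy (ρs ℓ) + ∑ ℓ, Real.negMulLog (p ℓ) :=
    Finset.sum_add_distrib
  rw [e1, e2, e3]
  linarith
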